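/- arXiv:1607.05825 — 2 statements merged into one kernel-verified Lean document; each statement's English description precedes it below -/
import Mathlib

section
/- For every integer k ≥ 3, every odd positive integer m with m > 3k - 4 lies in F(k); that is, Γ(k) ≤ 3k - 4, where Γ(k) is the largest odd positive integer not in F(k). -/
open Filter

/-- The Thue-Morse word, indexed from 1: `tm i` is the parity of the number of
1's in the binary expansion of `i - 1`. -/
def tm (i : ℕ) : ℕ := (Nat.digits 2 (i - 1)).sum % 2

/-- The factor `t_a t_{a+1} ⋯ t_b` of the Thue-Morse word. -/
def seg (a b : ℕ) : List ℕ := (List.range (b + 1 - a)).map (fun j => tm (a + j))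

/-- The `i`-th block of length `m` of the Thue-Morse word (blocks indexed from 0):
`t_{im+1} ⋯ t_{(i+1)m}`. -/
def block (m i : ℕ) : List ℕ := seg (i * m + 1) ((i + 1) * m)

/-- The prefix of the Thue-Morse word of length `k * m` is a `k`-anti-power:
its `k` consecutive blocks of length `m` are pairwise distinct. -/
def IsAntiPowerPrefix (m k : ℕ) : Prop :=
  ∀ i j, i < k → j < k → i ≠ j → block m i ≠ block m j

/-- `w` is a factor (contiguous substring) of the Thue-Morse word. -/
def IsFactor (w : List ℕ) : Prop :=
  ∃ a : ℕ, w = (List.range w.length).map (fun j => tm (a + 1 + j))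

/-- `δ(m) = ⌈log₂ (m/3)⌉` (a nonnegative integer for `m ≥ 2`). -/
noncomputable def delta (m : ℕ) : ℕ := (⌈Real.logb 2 ((m : ℝ) / 3)⌉).toNat

/-- `⌈log₂ m⌉`. -/
noncomputable def ell (m : ℕ) : ℕ := (⌈Real.logb 2 (m : ℝ)⌉).toNat

/-- `K(m)`: the smallest `k` such that the prefix of the Thue-Morse word of
length `k * m` is not a `k`-anti-power. -/
noncomputable def Kap (m : ℕ) : ℕ := sInf {k | ¬ IsAntiPowerPrefix m k}

/-- `γ(k)`: the smallest odd positive integer `m` such that the prefix of the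
Thue-Morse word of length `k * m` is a `k`-anti-power. -/
noncomputable def gam (k : ℕ) : ℕ := sInf {m | Odd m ∧ IsAntiPowerPrefix m k}

/-- `Γ(k)`: the largest odd positive integer `m` such that the prefix of the
Thue-Morse word of length `k * m` is not a `k`-anti-power. -/
noncomputable def Gam (k : ℕ) : ℕ := sSup {m | Odd m ∧ ¬ IsAntiPowerPrefix m k}

/-- The Thue-Morse morphism `μ` (0 ↦ 01, 1 ↦ 10) on words. -/
def mu (w : List ℕ) : List ℕ := w.flatMap (fun a => if a = 0 then [0, 1] else [1, 0])

def s (n : ℕ) : ℕ := (Nat.digits 2 n).sum % 2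

lemma s_lt (n : ℕ) : s n < 2 := Nat.mod_lt _ (by norm_num)

lemma s_two_mul (n : ℕ) : s (2 * n) = s n := by
  rcases Nat.eq_zero_or_pos n with h | h
  · simp [h]
  · rw [s, Nat.digits_def' (by norm_num : 1 < 2) (by omega : 0 < 2 * n)]
    simp [Nat.mul_div_cancel_left, s, Nat.mul_mod_right]

lemma s_two_mul_add_one (n : ℕ) : s (2 * n + 1) = 1 - s n := by
  rw [s, Nat.digits_def' (by norm_num : 1 < 2) (by omega : 0 < 2 * n + 1)]
  have h1 : (2 * n + 1) % 2 = 1 := by omega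
  have h2 : (2 * n + 1) / 2 = n := by omega
  rw [h1, h2, List.sum_cons]
  have := s_lt n
  rw [s] at *
  omega

/-- equal adjacent letters occur only at odd positions -/
lemma eq_adj_odd {j : ℕ} (h : s j = s (j + 1)) : j % 2 = 1 := by
  by_contra hc
  have hj : j = 2 * (j / 2) := by omega
  have h1 := s_two_mul (j / 2)
  have h2 := s_two_mul_add_one (j / 2)
  have h3 := s_lt (j / 2)
  rw [hj] at h
  omega

/-- no three consecutive equal letters -/
lemma no_triple {j : ℕ} (h1 : s j = s (j + 1)) (h2 : s (j + 1) = s (j + 2)) : False := by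
  have := eq_adj_odd h1
  have := eq_adj_odd h2
  omega

/-- an alternating factor of length 4 cannot start at an odd position -/
lemma alt_even {j : ℕ} (hj : j % 2 = 1) (h1 : s j ≠ s (j + 1)) (h2 : s (j + 1) ≠ s (j + 2))
    (h3 : s (j + 2) ≠ s (j + 3)) : False := by
  obtain ⟨i, hi⟩ : ∃ i, j = 2 * i + 1 := ⟨j / 2, by omega⟩
  subst hi
  have e1 := s_two_mul_add_one i
  have e2 : s (2 * i + 1 + 1) = s (i + 1) := by
    have : 2 * i + 1 + 1 = 2 * (i + 1) := by ring
    rw [this, s_two_mul]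
  have e3 : s (2 * i + 1 + 2) = 1 - s (i + 1) := by
    have : 2 * i + 1 + 2 = 2 * (i + 1) + 1 := by ring
    rw [this, s_two_mul_add_one]
  have e4 : s (2 * i + 1 + 3) = s (i + 2) := by
    have : 2 * i + 1 + 3 = 2 * (i + 2) := by ring
    rw [this, s_two_mul]
  have l1 := s_lt i; have l2 := s_lt (i + 1); have l3 := s_lt (i + 2)
  have hA : s i = s (i + 1) := by omega
  have hB : s (i + 1) = s (i + 2) := by omega
  exact no_triple hA hB

/-- two equal factors of length ≥ 4 start at positions of equal parity -/
lemma parity_sync {m a b : ℕ} (hm : 4 ≤ m) (h : ∀ r < m, s (a + r) = s (b + r)) :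
    a % 2 = b % 2 := by
  by_cases hc : ∃ r, r + 1 < m ∧ s (a + r) = s (a + r + 1)
  · obtain ⟨r, hr, he⟩ := hc
    have ha := eq_adj_odd he
    have hb : s (b + r) = s (b + r + 1) := by
      have h1 := h r (by omega)
      have h2 := h (r + 1) (by omega)
      have e1 : a + (r + 1) = a + r + 1 := by ring
      have e2 : b + (r + 1) = b + r + 1 := by ring
      rw [e1, e2] at h2
      omega
    have hb' := eq_adj_odd hb
    omega
  · push_neg at hc
    have ha2 : ∀ r, r + 1 < m → s (a + r) ≠ s (a + r + 1) := hc
    have hb2 : ∀ r, r + 1 < m → s (b + r) ≠ s (b + r + 1) := by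
      intro r hr hbe
      apply hc r hr
      have h1 := h r (by omega)
      have h2 := h (r + 1) (by omega)
      have e1 : a + (r + 1) = a + r + 1 := by ring
      have e2 : b + (r + 1) = b + r + 1 := by ring
      rw [e1, e2] at h2
      omega
    have hpa : a % 2 = 0 := by
      by_contra hcon
      refine alt_even (j := a) (by omega) ?_ ?_ ?_
      · exact ha2 0 (by omega)
      · have := ha2 1 (by omega); simpa [Nat.add_assoc] using this
      · have := ha2 2 (by omega); simpa [Nat.add_assoc] using this
    have hpb : b % 2 = 0 := by
      by_contra hcon
      refine alt_even (j := b) (by omega) ?_ ?_ ?_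
      · exact hb2 0 (by omega)
      · have := hb2 1 (by omega); simpa [Nat.add_assoc] using this
      · have := hb2 2 (by omega); simpa [Nat.add_assoc] using this
    omega

/-- synchronization: equal long factors start at positions congruent mod 2^d -/
lemma sync : ∀ d m a b : ℕ, 3 * 2 ^ d < 2 * m → (∀ r < m, s (a + r) = s (b + r)) →
    a % 2 ^ d = b % 2 ^ d := by
  intro d
  induction d with
  | zero => intro m a b _ _; simp [Nat.mod_one]
  | succ d ih =>
    intro m a b hm h
    have hpow : (2 : ℕ) ^ (d + 1) = 2 * 2 ^ d := by ring
    have hpos : 1 ≤ 2 ^ d := Nat.one_le_two_pow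
    have hm4 : 4 ≤ m := by omega
    have hpar := parity_sync hm4 h
    set ε := a % 2 with hε
    set a' := a / 2 with ha'
    set b' := b / 2 with hb'
    have ha : a = 2 * a' + ε := by omega
    have hb : b = 2 * b' + ε := by omega
    set m' := (m + 1 + ε) / 2 with hm'
    have key : ∀ r < m', s (a' + r) = s (b' + r) := by
      intro r hr
      rcases Nat.lt_or_ge (2 * r) ε with h0 | h0
      · have hr0 : r = 0 := by omega
        have hε1 : ε = 1 := by omega
        have h1 := s_two_mul_add_one a'
        have h2 := s_two_mul_add_one b'
        have h3 := h 0 (by omega)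
        have l1 := s_lt a'; have l2 := s_lt b'
        have e1 : a + 0 = 2 * a' + 1 := by omega
        have e2 : b + 0 = 2 * b' + 1 := by omega
        rw [e1, e2] at h3
        subst hr0
        simp only [Nat.add_zero]
        omega
      · set p := 2 * r - ε with hp
        have hpm : p < m := by omega
        have e1 : a + p = 2 * (a' + r) := by omega
        have e2 : b + p = 2 * (b' + r) := by omega
        have h3 := h p hpm
        rw [e1, e2, s_two_mul, s_two_mul] at h3
        exact h3
    have hm3 : 3 * 2 ^ d < 2 * m' := by omega
    have ihab := ih m' a' b' hm3 key
    have hmod : 2 * a' + ε ≡ 2 * b' + ε [MOD 2 * 2 ^ d] :=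
      Nat.ModEq.add_right ε (Nat.ModEq.mul_left' 2 ihab)
    rw [ha, hb, hpow]
    exact hmod

lemma tm_succ (n : ℕ) : tm (n + 1) = s n := rfl

lemma block_eq (m i : ℕ) : block m i = (List.range m).map (fun r => tm (i * m + 1 + r)) := by
  have h : (i + 1) * m + 1 - (i * m + 1) = m := by
    have : (i + 1) * m = i * m + m := by ring
    omega
  simp [block, seg, h]

lemma block_pt {m i j : ℕ} (h : block m i = block m j) (r : ℕ) (hr : r < m) :
    tm (i * m + 1 + r) = tm (j * m + 1 + r) := by
  rw [block_eq, block_eq] at h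
  have h2 := congrArg (fun l => l[r]?) h
  simpa [List.getElem?_map, List.getElem?_range, hr] using h2

lemma aux_blocks (k m : ℕ) (hk : 3 ≤ k) (hodd : Odd m) (hm : 3 * k - 4 < m)
    {i j : ℕ} (hj : j < k) (hij : i < j) (heq : block m i = block m j) : False := by
  have hm1 : 1 ≤ m := hodd.pos
  have hpt : ∀ r < m, s (i * m + r) = s (j * m + r) := by
    intro r hr
    have h1 := block_pt heq r hr
    have e1 : i * m + 1 + r = (i * m + r) + 1 := by omega
    have e2 : j * m + 1 + r = (j * m + r) + 1 := by omega
    rwa [e1, e2, tm_succ, tm_succ] at h1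
  set d := Nat.clog 2 k with hd
  have hk2 : k ≤ 2 ^ d := Nat.le_pow_clog (by norm_num) k
  have hk3 : 2 ^ (d - 1) < k := Nat.pow_pred_clog_lt_self (by norm_num) (by omega)
  have hdd : 2 ≤ d := by
    by_contra hcon
    have : (2 : ℕ) ^ d ≤ 2 ^ 1 := Nat.pow_le_pow_right (by norm_num) (by omega)
    omega
  have hsplit : 2 ^ d = 2 * 2 ^ (d - 1) := by
    have e : d - 1 + 1 = d := by omega
    calc (2 : ℕ) ^ d = 2 ^ (d - 1 + 1) := by rw [e]
      _ = 2 * 2 ^ (d - 1) := by ring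
  have hsplit2 : 2 ^ d = 4 * 2 ^ (d - 2) := by
    have e : d - 2 + 2 = d := by omega
    calc (2 : ℕ) ^ d = 2 ^ (d - 2 + 2) := by rw [e]
      _ = 4 * 2 ^ (d - 2) := by ring
  obtain ⟨c, hc⟩ := id hodd
  have h3m : 3 * 2 ^ d < 2 * m := by omega
  have hmods := sync d m (i * m) (j * m) h3m hpt
  have hle : i * m ≤ j * m := Nat.mul_le_mul_right m hij.le
  have hdvd : 2 ^ d ∣ j * m - i * m := (Nat.modEq_iff_dvd' hle).mp hmods
  have hsub : j * m - i * m = (j - i) * m := by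
    rw [Nat.sub_mul]
  rw [hsub] at hdvd
  have hcop : Nat.Coprime (2 ^ d) m := Nat.Coprime.pow_left d (by
    simpa [Nat.coprime_two_left] using hodd)
  have hdvd2 : 2 ^ d ∣ j - i := hcop.dvd_of_dvd_mul_right hdvd
  have hge : 2 ^ d ≤ j - i := Nat.le_of_dvd (by omega) hdvd2
  omega

theorem stmt9 (k : ℕ) (hk : 3 ≤ k) :
    (∀ m : ℕ, Odd m → 3 * k - 4 < m → IsAntiPowerPrefix m k) ∧ Gam k ≤ 3 * k - 4 := by
  have part1 : ∀ m : ℕ, Odd m → 3 * k - 4 < m → IsAntiPowerPrefix m k := by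
    intro m ho hm i j hi hj hne heq
    rcases hne.lt_or_gt with h | h
    · exact aux_blocks k m hk ho hm hj h heq
    · exact aux_blocks k m hk ho hm hi h heq.symm
  refine ⟨part1, ?_⟩
  rw [Gam]
  apply csSup_le'
  intro m hmem
  simp only [Set.mem_setOf_eq] at hmem
  by_contra hlt
  exact hmem.2 (part1 m hmem.1 (by omega))
end

section
/- limsup_{k→∞} Γ(k)/k = 3, where Γ(k) is the largest odd positive integer m such that the length-km prefix of the Thue-Morse word is not a k-anti-power. -/
open Filter

/-- Thue-Morse parity as an element of `ZMod 2`. -/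
def Z (n : ℕ) : ZMod 2 := ((Nat.digits 2 n).sum : ZMod 2)

lemma Z_zero : Z 0 = 0 := by simp [Z]

lemma Z_one : Z 1 = 1 := by simp [Z]

lemma Z_two_mul (n : ℕ) : Z (2 * n) = Z n := by
  rcases Nat.eq_zero_or_pos n with h | h
  · simp [h]
  · unfold Z
    rw [Nat.digits_def' (by norm_num : 1 < 2) (by omega : 0 < 2 * n)]
    simp [Nat.mul_div_cancel_left _ (by norm_num : 0 < 2), Nat.mul_mod_right]

lemma Z_two_mul_add_one (n : ℕ) : Z (2 * n + 1) = Z n + 1 := by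
  unfold Z
  rw [Nat.digits_def' (by norm_num : 1 < 2) (by omega : 0 < 2 * n + 1)]
  have h1 : (2 * n + 1) % 2 = 1 := by omega
  have h2 : (2 * n + 1) / 2 = n := by omega
  rw [h1, h2]
  push_cast [List.sum_cons]
  ring

lemma Z_pow_add {a x : ℕ} (hx : x < 2 ^ a) : Z (2 ^ a + x) = Z x + 1 := by
  induction a generalizing x with
  | zero =>
    interval_cases x
    simp [Z_one, Z_zero]
  | succ n ih =>
    rcases Nat.even_or_odd x with ⟨q, hq⟩ | ⟨q, hq⟩
    · have h : 2 ^ (n + 1) + x = 2 * (2 ^ n + q) := by rw [hq]; ring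
      have hq' : q < 2 ^ n := by rw [hq] at hx; rw [pow_succ] at hx; omega
      rw [h, Z_two_mul, ih hq', hq, ← two_mul, Z_two_mul]
    · have h : 2 ^ (n + 1) + x = 2 * (2 ^ n + q) + 1 := by rw [hq]; ring
      have hq' : q < 2 ^ n := by rw [hq] at hx; rw [pow_succ] at hx; omega
      rw [h, Z_two_mul_add_one, ih hq', hq, Z_two_mul_add_one]

/-- Thue-Morse has no three consecutive equal letters. -/
lemma no_three (u : ℕ) : ¬ (Z u = Z (u + 1) ∧ Z (u + 1) = Z (u + 2)) := by
  have key : ∀ w : ℕ, Z (2 * w) ≠ Z (2 * w + 1) := by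
    intro w h
    rw [Z_two_mul, Z_two_mul_add_one] at h
    have : (1 : ZMod 2) = 0 := by
      have := h.symm
      rwa [add_eq_left] at this
    simp at this
  rintro ⟨h1, h2⟩
  rcases Nat.even_or_odd u with ⟨w, hw⟩ | ⟨w, hw⟩
  · rw [hw, ← two_mul] at h1
    exact key w h1
  · have hw1 : u + 1 = 2 * (w + 1) := by omega
    have hw2 : u + 2 = 2 * (w + 1) + 1 := by omega
    rw [hw1, hw2] at h2
    exact key (w + 1) h2
/-- Difference sequence at shift `D`. -/
def G (D n : ℕ) : ZMod 2 := Z (n + D) + Z n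

lemma G_two_mul (D n : ℕ) : G (2 * D) n = G D (n / 2) := by
  rcases Nat.even_or_odd n with ⟨u, hu⟩ | ⟨u, hu⟩
  · have h1 : n + 2 * D = 2 * (u + D) := by omega
    have h2 : n / 2 = u := by omega
    have h3 : n = 2 * u := by omega
    rw [G, G, h1, h2, h3, Z_two_mul, Z_two_mul]
  · have h1 : n + 2 * D = 2 * (u + D) + 1 := by omega
    have h2 : n / 2 = u := by omega
    have h3 : n = 2 * u + 1 := by omega
    rw [G, G, h1, h2, h3, Z_two_mul_add_one, Z_two_mul_add_one]
    have : ∀ x y : ZMod 2, x + 1 + (y + 1) = x + y := by decide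
    exact this _ _

lemma G_pow_mul (v : ℕ) : ∀ D n : ℕ, G (2 ^ v * D) n = G D (n / 2 ^ v) := by
  induction v with
  | zero => intro D n; simp
  | succ w ih =>
    intro D n
    have h : 2 ^ (w + 1) * D = 2 ^ w * (2 * D) := by ring
    rw [h, ih, G_two_mul, Nat.div_div_eq_div_mul, pow_succ]

lemma G_odd_even (e u : ℕ) : G (2 * e + 1) (2 * u) = Z (u + e) + Z u + 1 := by
  have h : 2 * u + (2 * e + 1) = 2 * (u + e) + 1 := by ring
  rw [G, h, Z_two_mul_add_one, Z_two_mul]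
  ring

lemma G_odd_odd (e u : ℕ) : G (2 * e + 1) (2 * u + 1) = Z (u + e + 1) + Z u + 1 := by
  have h : 2 * u + 1 + (2 * e + 1) = 2 * (u + e + 1) := by ring
  rw [G, h, Z_two_mul, Z_two_mul_add_one]
  ring

private lemma zmod2_cancel {a b c : ZMod 2} (h : a + c + 1 = b + c + 1) : a = b :=
  add_right_cancel (add_right_cancel h)

/-- For odd `D`, `G D` is not constant on 4 consecutive integers. -/
lemma G_odd_not_const4 {D : ℕ} (hD : Odd D) (a : ℕ)
    (h1 : G D a = G D (a + 1)) (h2 : G D (a + 2) = G D (a + 3)) : False := by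
  obtain ⟨e, he⟩ := hD
  subst he
  rcases Nat.even_or_odd a with ⟨u, hu⟩ | ⟨u, hu⟩
  · have ha : a = 2 * u := by omega
    rw [ha, G_odd_even, G_odd_odd] at h1
    rw [show a + 2 = 2 * (u + 1) by omega, show a + 3 = 2 * (u + 1) + 1 by omega,
      G_odd_even, G_odd_odd] at h2
    have e1 : Z (u + e) = Z (u + e + 1) := zmod2_cancel h1
    have e2 : Z (u + e + 1) = Z (u + e + 2) := by
      have := zmod2_cancel h2
      rwa [show u + 1 + e = u + e + 1 by ring, show u + e + 1 + 1 = u + e + 2 by ring] at this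
    exact no_three (u + e) ⟨e1, e2⟩
  · rw [show a = 2 * u + 1 by omega, show 2 * u + 1 + 1 = 2 * (u + 1) by ring] at h1
    rw [G_odd_odd, G_odd_even] at h1
    rw [show a + 2 = 2 * (u + 1) + 1 by omega, show a + 3 = 2 * (u + 2) by omega,
      G_odd_odd, G_odd_even] at h2
    have e1 : Z u = Z (u + 1) := by
      rw [show u + 1 + e = u + e + 1 by ring] at h1
      exact add_left_cancel (add_right_cancel h1)
    have e2 : Z (u + 1) = Z (u + 2) := by
      rw [show u + 2 + e = u + 1 + e + 1 by ring] at h2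
      exact add_left_cancel (add_right_cancel h2)
    exact no_three u ⟨e1, e2⟩

/-- If `G (2^v * D)` (with `D` odd) is constant on an interval of length `L`,
then `L ≤ 3 * 2^v`. -/
lemma run_bound {v D A L : ℕ} (hD : Odd D) (c : ZMod 2)
    (H : ∀ r < L, G (2 ^ v * D) (A + r) = c) : L ≤ 3 * 2 ^ v := by
  by_contra hL
  push_neg at hL
  have hv : 0 < 2 ^ v := Nat.pow_pos (by norm_num)
  set u0 := A / 2 ^ v with hu0
  have hdm : 2 ^ v * u0 + A % 2 ^ v = A := Nat.div_add_mod A (2 ^ v)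
  have hmod : A % 2 ^ v < 2 ^ v := Nat.mod_lt A hv
  have hGu : ∀ s ≤ 3, G D (u0 + s) = c := by
    intro s hs
    rcases Nat.eq_zero_or_pos s with h0 | hspos
    · have := H 0 (by omega)
      rw [G_pow_mul] at this
      simpa [h0, ← hu0] using this
    · set n := 2 ^ v * (u0 + s) with hn
      have hexp : n = 2 ^ v * u0 + s * 2 ^ v := by rw [hn]; ring
      have hsb : s * 2 ^ v ≤ 3 * 2 ^ v := Nat.mul_le_mul_right _ hs
      have hsb1 : 2 ^ v ≤ s * 2 ^ v := Nat.le_mul_of_pos_left _ hspos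
      have hnA : A ≤ n := by omega
      have hnL : n - A < L := by omega
      have hrun := H (n - A) hnL
      rw [Nat.add_sub_cancel' hnA, G_pow_mul] at hrun
      rwa [Nat.mul_div_cancel_left _ hv] at hrun
  have h1 := (hGu 0 (by omega)).trans (hGu 1 (by omega)).symm
  have h2 := (hGu 2 (by omega)).trans (hGu 3 (by omega)).symm
  simp only [Nat.add_zero] at h1
  exact G_odd_not_const4 hD u0 h1 h2
lemma tm_eq (n : ℕ) : tm (n + 1) = (Z n).val := by
  rw [tm, Z, Nat.add_sub_cancel, ZMod.val_natCast]

lemma zmod2_val_inj {x y : ZMod 2} (h : x.val = y.val) : x = y := by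
  revert h; revert x y; decide

lemma block_map (m i : ℕ) :
    block m i = (List.range m).map (fun r => (Z (i * m + r)).val) := by
  rw [block, seg]
  have hlen : (i + 1) * m + 1 - (i * m + 1) = m := by
    have : (i + 1) * m = i * m + m := by ring
    omega
  rw [hlen]
  apply List.map_congr_left
  intro r _
  rw [show i * m + 1 + r = (i * m + r) + 1 by ring, tm_eq]

lemma block_eq_iff {m i j : ℕ} :
    block m i = block m j ↔ ∀ r < m, Z (i * m + r) = Z (j * m + r) := by
  rw [block_map, block_map]
  constructor
  · intro h r hr
    have := List.map_eq_map_iff.mp h r (List.mem_range.mpr hr)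
    exact zmod2_val_inj this
  · intro h
    apply List.map_eq_map_iff.mpr
    intro r hr
    rw [h r (List.mem_range.mp hr)]

/-- Two equal blocks of odd length `m` among the first `k` force `m ≤ 3*(k-1)`. -/
lemma block_collision_bound {m k i j : ℕ} (hm : Odd m) (hij : i < j) (hjk : j < k)
    (hbl : block m i = block m j) : m ≤ 3 * (k - 1) := by
  have hZ := block_eq_iff.mp hbl
  have hji : j - i ≠ 0 := by omega
  obtain ⟨v, w, hw, hvw⟩ := Nat.exists_eq_two_pow_mul_odd hji
  have hDodd : Odd (w * m) := hw.mul hm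
  have hG : ∀ r < m, G (2 ^ v * (w * m)) (i * m + r) = 0 := by
    intro r hr
    have hjm : i * m + r + (j - i) * m = j * m + r := by
      have : (j - i) * m + i * m = j * m := by
        rw [← add_mul]
        congr 1
        omega
      omega
    have hDval : (j - i) * m = 2 ^ v * (w * m) := by rw [hvw]; ring
    rw [G, ← hDval, hjm, hZ r hr]
    have : ∀ x : ZMod 2, x + x = 0 := by decide
    exact this _
  have hm3 : m ≤ 3 * 2 ^ v := run_bound hDodd 0 hG
  have hwpos : 1 ≤ w := hw.pos
  have hvle : 2 ^ v ≤ j - i := by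
    calc 2 ^ v = 2 ^ v * 1 := by ring
    _ ≤ 2 ^ v * w := Nat.mul_le_mul_left _ hwpos
    _ = j - i := hvw.symm
  omega

lemma Gam_le (k : ℕ) : Gam k ≤ 3 * k := by
  apply csSup_le'
  rintro m ⟨hm, hAP⟩
  rw [IsAntiPowerPrefix] at hAP
  push_neg at hAP
  obtain ⟨i, j, hik, hjk, hij, hbl⟩ := hAP
  rcases hij.lt_or_gt with h | h
  · have := block_collision_bound hm h hjk hbl
    omega
  · have := block_collision_bound hm h hik hbl.symm
    omega
lemma Z_two' : Z 2 = 1 := by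
  have h := Z_two_mul 1
  norm_num at h
  rw [h, Z_one]

lemma Z_three : Z 3 = 0 := by
  have h := Z_two_mul_add_one 1
  norm_num at h
  rw [h, Z_one]; decide

lemma Z_four : Z 4 = 1 := by
  have h := Z_two_mul 2
  norm_num at h
  rw [h, Z_two']

lemma Z_five : Z 5 = 0 := by
  have h := Z_two_mul_add_one 2
  norm_num at h
  rw [h, Z_two']; decide

lemma Z_three_pow {b x : ℕ} (hx : x < 2 ^ b) : Z (3 * 2 ^ b + x) = Z x := by
  have h1 : 3 * 2 ^ b + x = 2 ^ (b + 1) + (2 ^ b + x) := by rw [pow_succ]; ring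
  have h2 : 2 ^ b + x < 2 ^ (b + 1) := by rw [pow_succ]; omega
  rw [h1, Z_pow_add h2, Z_pow_add hx]
  have : ∀ y : ZMod 2, y + 1 + 1 = y := by decide
  exact this _

/-- The explicit witness family: for `t ≥ 3`, the blocks `i = 2^t + 1` and
`j = i + 4^t` of length `m = 3*4^t - 2^t + 1` of the Thue-Morse word coincide. -/
lemma witness (t : ℕ) (ht : 3 ≤ t) :
    Odd (3 * 4 ^ t - 2 ^ t + 1) ∧
      ¬ IsAntiPowerPrefix (3 * 4 ^ t - 2 ^ t + 1) (4 ^ t + 2 ^ t + 2) := by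
  set T := 2 ^ t with hT
  set Q := 4 ^ t with hQdef
  have hQ : Q = T * T := by rw [hQdef, hT, ← pow_add, show (4:ℕ) = 2^2 by norm_num, ← pow_mul]
                            congr 1; omega
  have hT8 : 8 ≤ T := by
    calc (8:ℕ) = 2 ^ 3 := by norm_num
    _ ≤ 2 ^ t := Nat.pow_le_pow_right (by norm_num) ht
  obtain ⟨c, hc⟩ : ∃ c, 3 * T = c + 1 := ⟨3 * T - 1, by omega⟩
  have hc' : (3 * (T:ℤ)) = (c:ℤ) + 1 := by exact_mod_cast hc
  set m := 3 * 4 ^ t - 2 ^ t + 1 with hmdef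
  have hmval : m = T * c + 1 := by
    have h3Q : 3 * Q = T * c + T := by
      zify [hQ]
      linear_combination (T:ℤ) * hc'
    have hTQ : T ≤ 3 * Q := by omega
    rw [hmdef, ← hT, ← hQdef]
    omega
  have hodd : Odd m := by
    obtain ⟨T', hT'⟩ : ∃ T', T = 2 * T' := ⟨2 ^ (t-1), by rw [hT, ← pow_succ']; congr 1; omega⟩
    exact ⟨T' * c, by rw [hmval, hT']; ring⟩
  refine ⟨hodd, ?_⟩
  intro hAP
  set i := T + 1 with hi
  set j := T + 1 + Q with hj
  set a := 3 * T + 2 with ha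
  have him : i * m = a * Q + 1 := by
    rw [hi, hmval, ha, hQ]
    zify
    linear_combination (-(T:ℤ)^2 - (T:ℤ)) * hc'
  have h3Q : T * c + T = 3 * Q := by
    zify [hQ]
    linear_combination (-(T:ℤ)) * hc'
  have hQpos : 0 < Q := by omega
  have hQ2 : Q = 2 ^ (2 * t) := by rw [hQdef, pow_mul]; norm_num
  have hT1 : 2 * T = 2 ^ (t + 1) := by rw [hT, pow_succ]; ring
  -- the key: blocks i and j coincide
  have hbl : block m i = block m j := by
    rw [block_eq_iff]
    intro r hr
    have hjm : j * m + r = (i * m + r) + Q * m := by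
      rw [hj, hi]; ring
    have hQpow : Q * m = 2 ^ (2 * t) * m := by rw [hQ2]
    set n := i * m + r with hn
    have hnlow : a * Q + 1 ≤ n := by omega
    have hnhigh : n < (a + 3) * Q := by
      have h1 : n ≤ a * Q + 1 + T * c := by omega
      have hexp : (a + 3) * Q = a * Q + 3 * Q := by ring
      omega
    set u := n / Q with hu
    have hua : a ≤ u := by
      rw [hu]
      exact (Nat.le_div_iff_mul_le hQpos).mpr (by omega)
    have hua3 : u < a + 3 := by
      rw [hu]
      exact Nat.div_lt_iff_lt_mul hQpos |>.mpr hnhigh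
    have hGmu : G m u = 0 := by
      have hcompute : ∀ s, s ≤ 2 → G m (a + s) = 0 := by
        intro s hs
        have hws : a + s + m = 3 * Q + (2 * T + 3 + s) := by omega
        have h2T3 : 2 * T + 3 + s < Q := by nlinarith
        have hZ1 : Z (a + s + m) = Z (3 + s) + 1 := by
          rw [hws, hQ2, Z_three_pow (by omega : 2 * T + 3 + s < 2 ^ (2 * t)),
            show 2 * T + 3 + s = 2 ^ (t + 1) + (3 + s) by omega,
            Z_pow_add (by omega : 3 + s < 2 ^ (t + 1))]
        have hZ2 : Z (a + s) = Z (2 + s) := by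
          rw [show a + s = 3 * 2 ^ t + (2 + s) by omega,
            Z_three_pow (by omega : 2 + s < 2 ^ t)]
        rw [G, hZ1, hZ2]
        interval_cases s
        · rw [show (3:ℕ) + 0 = 3 from rfl, show (2:ℕ) + 0 = 2 from rfl, Z_three, Z_two']
          decide
        · rw [show (3:ℕ) + 1 = 4 from rfl, show (2:ℕ) + 1 = 3 from rfl, Z_four, Z_three]
          decide
        · rw [show (3:ℕ) + 2 = 5 from rfl, show (2:ℕ) + 2 = 4 from rfl, Z_five, Z_four]
          decide
      have hcase : u = a ∨ u = a + 1 ∨ u = a + 2 := by omega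
      rcases hcase with h | h | h
      · rw [h, show a = a + 0 from rfl] at *
        exact hcompute 0 (by norm_num)
      · rw [h]; exact hcompute 1 (by norm_num)
      · rw [h]; exact hcompute 2 (by norm_num)
    have hu2 : n / 2 ^ (2 * t) = u := by rw [hu, hQ2]
    have hGn : G (Q * m) n = 0 := by
      rw [hQpow, G_pow_mul, hu2]
      exact hGmu
    rw [hjm]
    have hsum : Z n + Z (n + Q * m) = 0 := by
      rw [G] at hGn
      rw [add_comm] at hGn
      exact hGn
    have hxy : ∀ x y : ZMod 2, x + y = 0 → x = y := by decide
    exact hxy _ _ hsum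
  exact hAP i j (by omega) (by omega) (by omega) hbl
lemma S_mem_le {k m : ℕ} (h : Odd m ∧ ¬ IsAntiPowerPrefix m k) : m ≤ 3 * k := by
  obtain ⟨hm, hAP⟩ := h
  rw [IsAntiPowerPrefix] at hAP
  push_neg at hAP
  obtain ⟨i, j, hik, hjk, hij, hbl⟩ := hAP
  rcases hij.lt_or_gt with h | h
  · have := block_collision_bound hm h hjk hbl
    omega
  · have := block_collision_bound hm h hik hbl.symm
    omega

lemma Gam_le' (k : ℕ) : Gam k ≤ 3 * k :=
  csSup_le' fun _ hm => S_mem_le hm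

lemma Gam_ge (t : ℕ) (ht : 3 ≤ t) :
    3 * 4 ^ t - 2 ^ t + 1 ≤ Gam (4 ^ t + 2 ^ t + 2) := by
  obtain ⟨hodd, hAP⟩ := witness t ht
  exact le_csSup ⟨3 * (4 ^ t + 2 ^ t + 2), fun x hx => S_mem_le hx⟩ ⟨hodd, hAP⟩

theorem stmt12 :
    Filter.limsup (fun k : ℕ => (Gam k : ℝ) / k) Filter.atTop = 3 := by
  have hub : ∀ᶠ k in atTop, (Gam k : ℝ) / k ≤ 3 := by
    filter_upwards [eventually_ge_atTop 1] with k hk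
    have hk0 : (0:ℝ) < k := by exact_mod_cast hk
    rw [div_le_iff₀ hk0]
    have := Gam_le' k
    have : (Gam k : ℝ) ≤ 3 * k := by exact_mod_cast this
    linarith
  have hnonneg : ∀ k : ℕ, (0:ℝ) ≤ (Gam k : ℝ) / k := by
    intro k
    positivity
  have hbdd : IsBoundedUnder (· ≤ ·) atTop (fun k : ℕ => (Gam k : ℝ) / k) := ⟨3, by
    simpa [eventually_map] using hub⟩
  have hcob : IsCoboundedUnder (· ≤ ·) atTop (fun k : ℕ => (Gam k : ℝ) / k) :=
    isCoboundedUnder_le_of_le atTop hnonneg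
  apply le_antisymm
  · exact limsup_le_of_le hcob hub
  · -- lower bound: 3 ≤ limsup
    have key : ∀ ε : ℝ, 0 < ε → (3 - ε) ≤ limsup (fun k : ℕ => (Gam k : ℝ) / k) atTop := by
      intro ε hε
      apply le_limsup_of_frequently_le _ hbdd
      rw [frequently_atTop]
      intro N
      -- choose t large
      obtain ⟨n, hn⟩ := pow_unbounded_of_one_lt (max (9 / ε) (N : ℝ)) (by norm_num : (1:ℝ) < 2)
      set t := max n 3 with htdef
      have ht3 : 3 ≤ t := le_max_right _ _
      have h2mono : (2:ℝ) ^ n ≤ (2:ℝ) ^ t :=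
        pow_le_pow_right₀ (by norm_num) (le_max_left _ _)
      have h2t : max (9 / ε) (N : ℝ) < (2:ℝ) ^ t := lt_of_lt_of_le hn h2mono
      have hte : 9 < ε * 2 ^ t := by
        have h1 : 9 / ε < (2:ℝ) ^ t := lt_of_le_of_lt (le_max_left _ _) h2t
        calc (9:ℝ) = (9 / ε) * ε := by field_simp
        _ < (2:ℝ) ^ t * ε := by
            apply mul_lt_mul_of_pos_right h1 hε
        _ = ε * 2 ^ t := by ring
      have htN : (N : ℝ) < (2:ℝ) ^ t := lt_of_le_of_lt (le_max_right _ _) h2t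
      have htNn : N ≤ 2 ^ t := by
        have : (N:ℝ) < ((2 ^ t : ℕ) : ℝ) := by push_cast; exact htN
        exact_mod_cast this.le
      set k := 4 ^ t + 2 ^ t + 2 with hkdef
      refine ⟨k, le_trans htNn (by rw [hkdef]; linarith [Nat.zero_le (4 ^ t)]), ?_⟩
      have hGam := Gam_ge t ht3
      have hkpos : (0:ℝ) < k := by positivity
      have hm : ((3 * 4 ^ t - 2 ^ t + 1 : ℕ) : ℝ) ≤ (Gam k : ℝ) := by exact_mod_cast hGam
      have hmcast : ((3 * 4 ^ t - 2 ^ t + 1 : ℕ) : ℝ) = 3 * 4 ^ t - 2 ^ t + 1 := by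
        have hle : (2:ℕ) ^ t ≤ 3 * 4 ^ t := by
          have : (2:ℕ) ^ t ≤ 4 ^ t := Nat.pow_le_pow_left (by norm_num) t
          omega
        push_cast [Nat.cast_sub hle]
        ring
      have hkcast : (k : ℝ) = 4 ^ t + 2 ^ t + 2 := by
        rw [hkdef]; push_cast; ring
      have hdiv : (3 - ε) ≤ (Gam k : ℝ) / k := by
        rw [le_div_iff₀ hkpos]
        have h4t : ((2:ℝ) ^ t) ^ 2 = 4 ^ t := by
          rw [← pow_mul, show (4:ℝ) = 2^2 by norm_num, ← pow_mul]
          ring_nf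
        have h2tpos : (0:ℝ) < 2 ^ t := by positivity
        have h2t8 : (8:ℝ) ≤ 2 ^ t := by
          calc (8:ℝ) = 2 ^ 3 := by norm_num
          _ ≤ 2 ^ t := pow_le_pow_right₀ (by norm_num) ht3
        nlinarith [hm, hmcast, hkcast, hte, h4t, h2tpos, h2t8]
      exact hdiv
    have hL := key
    by_contra hlt
    push_neg at hlt
    obtain ⟨ε, hε, hε3⟩ : ∃ ε : ℝ, 0 < ε ∧
        limsup (fun k : ℕ => (Gam k : ℝ) / k) atTop < 3 - ε := by
      refine ⟨(3 - limsup (fun k : ℕ => (Gam k : ℝ) / k) atTop) / 2, by linarith, by linarith⟩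
    exact absurd (key _ hε) (by linarith)
end
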